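/- Exponential contraction of pairs of solutions (uniqueness part of Theorem 1): Assume p > 1 and q > 1 with 1/p + 1/q = 1, and assume g ∈ H{G_1,…,G_n} and f ∈ H{F_1,…,F_n}. Suppose there exist real constants ε > 0, ξ_i > 0, α_{ij}, β_{ij} (i,j = 1,…,n) such that for every i: (−d̲_i + ε)ξ_i + G_i[ξ_i a*_{ii} + (1/p)Σ_{j≠i} ξ_j (a*_{ji})^{α_{ji}p}] + (1/q)ξ_i Σ_{j≠i} G_j (a*_{ij})^{(1−α_{ij})q} + (1/p)F_i Σ_{j=1}^n ξ_j (b*_{ji})^{β_{ji}p} e^{ε τ_{ji}} + (1/q)ξ_i Σ_{j=1}^n F_j (b*_{ij})^{(1−β_{ij})q} e^{ε τ_{ij}} ≤ 0. Then for any two solutions u and ũ of the system and each i = 1,…,n there is a constant C > 0 with |u_i(t) − ũ_i(t)| ≤ C e^{−εt} for all t ≥ 0. -/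

import Mathlib

open Real Finset

private lemma sign_mul_self' (r : ℝ) : Real.sign r * r = |r| := by
  rcases lt_trichotomy r 0 with h | h | h
  · rw [Real.sign_of_neg h, abs_of_neg h]; ring
  · simp [h]
  · rw [Real.sign_of_pos h, abs_of_pos h]; ring

private lemma abs_sign_le_one' (r : ℝ) : |Real.sign r| ≤ 1 := by
  rcases lt_trichotomy r 0 with h | h | h
  · rw [Real.sign_of_neg h]; norm_num
  · simp [h]
  · rw [Real.sign_of_pos h]; norm_num

open Real Finset

private lemma rpow_sub_one_mul {p : ℝ} (hp : 1 < p) {r : ℝ} (hr : 0 ≤ r) :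
    r ^ (p - 1) * r = r ^ p := by
  rcases eq_or_lt_of_le hr with h | h
  · rw [← h]
    rw [Real.zero_rpow (by linarith), Real.zero_rpow (by linarith), zero_mul]
  · nth_rewrite 2 [← Real.rpow_one r]
    rw [← Real.rpow_add h]
    norm_num

private lemma young_aux {p q : ℝ} (hp : 1 < p) (hq : 1 < q) (hpq : 1 / p + 1 / q = 1)
    {a X Y : ℝ} (α : ℝ) (ha : 0 ≤ a) (hX : 0 ≤ X) (hY : 0 ≤ Y) :
    a * (X ^ (p - 1) * Y) ≤
      (1 / q) * a ^ ((1 - α) * q) * X ^ p + (1 / p) * a ^ (α * p) * Y ^ p := by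
  have hp0 : (0:ℝ) < p := by linarith
  have hq0 : (0:ℝ) < q := by linarith
  have hpq2 : (p - 1) * q = p := by
    have h1 : p * q = p + q := by field_simp at hpq; linarith
    nlinarith
  rcases eq_or_lt_of_le ha with h0 | h0
  · rw [← h0, zero_mul]
    have h1 : (0:ℝ) ≤ (1 / q) * (0:ℝ) ^ ((1 - α) * q) * X ^ p := by positivity
    have h2 : (0:ℝ) ≤ (1 / p) * (0:ℝ) ^ (α * p) * Y ^ p := by positivity
    linarith
  · have hconj : Real.HolderConjugate q p :=
      Real.holderConjugate_iff.mpr ⟨hq, by rw [inv_eq_one_div, inv_eq_one_div]; linarith⟩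
    have hX1 : 0 ≤ a ^ (1 - α) * X ^ (p - 1) := by positivity
    have hY1 : 0 ≤ a ^ α * Y := by positivity
    have young := Real.young_inequality_of_nonneg hX1 hY1 hconj
    have hfact : a ^ (1 - α) * a ^ α = a := by
      rw [← Real.rpow_add h0]; norm_num
    have heq : a * (X ^ (p - 1) * Y) = a ^ (1 - α) * X ^ (p - 1) * (a ^ α * Y) := by
      calc a * (X ^ (p - 1) * Y) = (a ^ (1 - α) * a ^ α) * (X ^ (p - 1) * Y) := by rw [hfact]
      _ = a ^ (1 - α) * X ^ (p - 1) * (a ^ α * Y) := by ring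
    have hXq : (a ^ (1 - α) * X ^ (p - 1)) ^ q = a ^ ((1 - α) * q) * X ^ p := by
      rw [Real.mul_rpow (by positivity) (by positivity),
        ← Real.rpow_mul ha, ← Real.rpow_mul hX, hpq2]
    have hYp : (a ^ α * Y) ^ p = a ^ (α * p) * Y ^ p := by
      rw [Real.mul_rpow (by positivity) hY, ← Real.rpow_mul ha]
    rw [heq]
    calc a ^ (1 - α) * X ^ (p - 1) * (a ^ α * Y)
        ≤ (a ^ (1 - α) * X ^ (p - 1)) ^ q / q + (a ^ α * Y) ^ p / p := young
      _ = (1 / q) * a ^ ((1 - α) * q) * X ^ p + (1 / p) * a ^ (α * p) * Y ^ p := by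
          rw [hXq, hYp]; ring

private lemma sum_erase_swap {n : ℕ} (f : Fin n → Fin n → ℝ) :
    ∑ i, ∑ j ∈ univ.erase i, f i j = ∑ i, ∑ j ∈ univ.erase i, f j i := by
  have h : ∀ g : Fin n → Fin n → ℝ,
      ∑ i, ∑ j ∈ univ.erase i, g i j = ∑ i, ∑ j, if j ≠ i then g i j else 0 := by
    intro g
    refine Finset.sum_congr rfl fun i _ => ?_
    rw [← Finset.filter_ne', Finset.sum_filter]
  rw [h f, h (fun i j => f j i)]
  rw [Finset.sum_comm]
  refine Finset.sum_congr rfl fun i _ => Finset.sum_congr rfl fun j _ => ?_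
  by_cases hij : i ≠ j
  · rw [if_pos hij, if_pos hij.symm]
  · push_neg at hij; subst hij; simp

private lemma key_algebra {n : ℕ} {p q : ℝ} (hp : 1 < p) (hq : 1 < q) (hpq : 1 / p + 1 / q = 1)
    (ε : ℝ) (ξ G F dlow : Fin n → ℝ) (A B E : Fin n → Fin n → ℝ)
    (α β : Fin n → Fin n → ℝ)
    (hξ : ∀ i, 0 < ξ i) (hG : ∀ i, 0 < G i) (hF : ∀ i, 0 < F i)
    (hA : ∀ i j, 0 ≤ A i j) (hB : ∀ i j, 0 ≤ B i j) (hE : ∀ i j, 0 ≤ E i j)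
    (hineq : ∀ i,
      (-dlow i + ε) * ξ i
        + G i * (ξ i * A i i + (1 / p) * ∑ j ∈ univ.erase i, ξ j * (A j i) ^ (α j i * p))
        + (1 / q) * ξ i * ∑ j ∈ univ.erase i, G j * (A i j) ^ ((1 - α i j) * q)
        + (1 / p) * F i * ∑ j, ξ j * (B j i) ^ (β j i * p) * E j i
        + (1 / q) * ξ i * ∑ j, F j * (B i j) ^ ((1 - β i j) * q) * E i j ≤ 0)
    (x : Fin n → ℝ) (y : Fin n → Fin n → ℝ) (hx : ∀ i, 0 ≤ x i) (hy : ∀ i j, 0 ≤ y i j) :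
    ∑ i, ξ i * (p * x i ^ (p - 1) *
        ((ε - dlow i) * x i + ∑ j, A i j * G j * x j + ∑ j, B i j * F j * E i j * y i j))
      + ∑ i, ∑ j, ξ i * F j * (B i j) ^ (β i j * p) * E i j * (x j ^ p - y i j ^ p) ≤ 0 := by
  have hp0 : (0:ℝ) < p := by linarith
  have hq0 : (0:ℝ) < q := by linarith
  have hxp : ∀ i, 0 ≤ x i ^ p := fun i => Real.rpow_nonneg (hx i) p
  -- Step 1 : per-row estimate using Young's inequality
  have step1 : ∀ i, ξ i * (p * x i ^ (p - 1) *
      ((ε - dlow i) * x i + ∑ j, A i j * G j * x j + ∑ j, B i j * F j * E i j * y i j))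
      ≤ p * (ε - dlow i) * ξ i * x i ^ p
        + p * ξ i * G i * A i i * x i ^ p
        + (p / q) * ξ i * (∑ j ∈ univ.erase i, G j * (A i j) ^ ((1 - α i j) * q)) * x i ^ p
        + ξ i * (∑ j ∈ univ.erase i, G j * (A i j) ^ (α i j * p) * x j ^ p)
        + (p / q) * ξ i * (∑ j, F j * (B i j) ^ ((1 - β i j) * q) * E i j) * x i ^ p
        + ξ i * (∑ j, F j * (B i j) ^ (β i j * p) * E i j * y i j ^ p) := by
    intro i
    have e1 : ξ i * (p * x i ^ (p - 1) *
        ((ε - dlow i) * x i + ∑ j, A i j * G j * x j + ∑ j, B i j * F j * E i j * y i j))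
        = (p * ξ i) * ((ε - dlow i) * (x i ^ (p - 1) * x i)
          + ∑ j, G j * (A i j * (x i ^ (p - 1) * x j))
          + ∑ j, (F j * E i j) * (B i j * (x i ^ (p - 1) * y i j))) := by
      have hA1 : (∑ j, G j * (A i j * (x i ^ (p - 1) * x j)))
          = x i ^ (p - 1) * ∑ j, A i j * G j * x j := by
        rw [Finset.mul_sum]; exact Finset.sum_congr rfl fun j _ => by ring
      have hB1 : (∑ j, (F j * E i j) * (B i j * (x i ^ (p - 1) * y i j)))
          = x i ^ (p - 1) * ∑ j, B i j * F j * E i j * y i j := by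
        rw [Finset.mul_sum]; exact Finset.sum_congr rfl fun j _ => by ring
      rw [hA1, hB1]
      ring
    rw [e1]
    have hmid : ∑ j, G j * (A i j * (x i ^ (p - 1) * x j))
        ≤ G i * A i i * x i ^ p
          + ∑ j ∈ univ.erase i, G j * ((1 / q) * (A i j) ^ ((1 - α i j) * q) * x i ^ p
            + (1 / p) * (A i j) ^ (α i j * p) * x j ^ p) := by
      rw [← Finset.add_sum_erase _ _ (Finset.mem_univ i)]
      refine add_le_add ?_ (Finset.sum_le_sum fun j _ => ?_)
      · rw [rpow_sub_one_mul hp (hx i)]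
        exact le_of_eq (by ring)
      · exact mul_le_mul_of_nonneg_left
          (young_aux hp hq hpq (α i j) (hA i j) (hx i) (hx j)) (hG j).le
    have hbnd : ∑ j, (F j * E i j) * (B i j * (x i ^ (p - 1) * y i j))
        ≤ ∑ j, (F j * E i j) * ((1 / q) * (B i j) ^ ((1 - β i j) * q) * x i ^ p
            + (1 / p) * (B i j) ^ (β i j * p) * y i j ^ p) :=
      Finset.sum_le_sum fun j _ => mul_le_mul_of_nonneg_left
        (young_aux hp hq hpq (β i j) (hB i j) (hx i) (hy i j))
        (mul_nonneg (hF j).le (hE i j))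
    have hfull := mul_le_mul_of_nonneg_left
      (add_le_add (add_le_add
        (le_of_eq (by rw [rpow_sub_one_mul hp (hx i)] :
          (ε - dlow i) * (x i ^ (p - 1) * x i) = (ε - dlow i) * x i ^ p)) hmid) hbnd)
      (mul_nonneg hp0.le (hξ i).le)
    refine le_trans hfull (le_of_eq ?_)
    have eA : ∑ j ∈ univ.erase i, G j * ((1 / q) * (A i j) ^ ((1 - α i j) * q) * x i ^ p
          + (1 / p) * (A i j) ^ (α i j * p) * x j ^ p)
        = (1 / q) * (∑ j ∈ univ.erase i, G j * (A i j) ^ ((1 - α i j) * q)) * x i ^ p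
          + (1 / p) * ∑ j ∈ univ.erase i, G j * (A i j) ^ (α i j * p) * x j ^ p := by
      have hsplitA : (∑ j ∈ univ.erase i, G j * ((1 / q) * (A i j) ^ ((1 - α i j) * q) * x i ^ p
            + (1 / p) * (A i j) ^ (α i j * p) * x j ^ p))
          = (∑ j ∈ univ.erase i, G j * ((1 / q) * (A i j) ^ ((1 - α i j) * q) * x i ^ p))
            + ∑ j ∈ univ.erase i, G j * ((1 / p) * (A i j) ^ (α i j * p) * x j ^ p) := by
        rw [← Finset.sum_add_distrib]
        exact Finset.sum_congr rfl fun j _ => by ring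
      rw [hsplitA]
      congr 1
      · rw [Finset.mul_sum, Finset.sum_mul]
        exact Finset.sum_congr rfl fun j _ => by ring
      · rw [Finset.mul_sum]
        exact Finset.sum_congr rfl fun j _ => by ring
    have eB : ∑ j, (F j * E i j) * ((1 / q) * (B i j) ^ ((1 - β i j) * q) * x i ^ p
          + (1 / p) * (B i j) ^ (β i j * p) * y i j ^ p)
        = (1 / q) * (∑ j, F j * (B i j) ^ ((1 - β i j) * q) * E i j) * x i ^ p
          + (1 / p) * ∑ j, F j * (B i j) ^ (β i j * p) * E i j * y i j ^ p := by
      have hsplitB : (∑ j, (F j * E i j) * ((1 / q) * (B i j) ^ ((1 - β i j) * q) * x i ^ p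
            + (1 / p) * (B i j) ^ (β i j * p) * y i j ^ p))
          = (∑ j, (F j * E i j) * ((1 / q) * (B i j) ^ ((1 - β i j) * q) * x i ^ p))
            + ∑ j, (F j * E i j) * ((1 / p) * (B i j) ^ (β i j * p) * y i j ^ p) := by
        rw [← Finset.sum_add_distrib]
        exact Finset.sum_congr rfl fun j _ => by ring
      rw [hsplitB]
      congr 1
      · rw [Finset.mul_sum, Finset.sum_mul]
        exact Finset.sum_congr rfl fun j _ => by ring
      · rw [Finset.mul_sum]
        exact Finset.sum_congr rfl fun j _ => by ring
    rw [eA, eB]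
    field_simp
    ring
  -- Step 2 : assemble
  have hA1 : (∑ i, (p * (ε - dlow i) * ξ i * x i ^ p
        + p * ξ i * G i * A i i * x i ^ p
        + (p / q) * ξ i * (∑ j ∈ univ.erase i, G j * (A i j) ^ ((1 - α i j) * q)) * x i ^ p
        + ξ i * (∑ j ∈ univ.erase i, G j * (A i j) ^ (α i j * p) * x j ^ p)
        + (p / q) * ξ i * (∑ j, F j * (B i j) ^ ((1 - β i j) * q) * E i j) * x i ^ p
        + ξ i * (∑ j, F j * (B i j) ^ (β i j * p) * E i j * y i j ^ p)))
      = (∑ i, p * (ε - dlow i) * ξ i * x i ^ p)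
        + (∑ i, p * ξ i * G i * A i i * x i ^ p)
        + (∑ i, (p / q) * ξ i * (∑ j ∈ univ.erase i, G j * (A i j) ^ ((1 - α i j) * q)) * x i ^ p)
        + (∑ i, ξ i * (∑ j ∈ univ.erase i, G j * (A i j) ^ (α i j * p) * x j ^ p))
        + (∑ i, (p / q) * ξ i * (∑ j, F j * (B i j) ^ ((1 - β i j) * q) * E i j) * x i ^ p)
        + (∑ i, ξ i * (∑ j, F j * (B i j) ^ (β i j * p) * E i j * y i j ^ p)) := by
    simp only [Finset.sum_add_distrib]
  have hC : (∑ i, ∑ j, ξ i * F j * (B i j) ^ (β i j * p) * E i j * (x j ^ p - y i j ^ p))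
      = (∑ i, ∑ j, ξ i * F j * (B i j) ^ (β i j * p) * E i j * x j ^ p)
        - ∑ i, ∑ j, ξ i * F j * (B i j) ^ (β i j * p) * E i j * y i j ^ p := by
    simp only [mul_sub, Finset.sum_sub_distrib]
  have hcancel : (∑ i, ξ i * (∑ j, F j * (B i j) ^ (β i j * p) * E i j * y i j ^ p))
      = ∑ i, ∑ j, ξ i * F j * (B i j) ^ (β i j * p) * E i j * y i j ^ p := by
    refine Finset.sum_congr rfl fun i _ => ?_
    rw [Finset.mul_sum]
    exact Finset.sum_congr rfl fun j _ => by ring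
  have hswap4 : (∑ i, ξ i * (∑ j ∈ univ.erase i, G j * (A i j) ^ (α i j * p) * x j ^ p))
      = ∑ i, (∑ j ∈ univ.erase i, ξ j * (A j i) ^ (α j i * p)) * (G i * x i ^ p) := by
    have h1 : (∑ i, ξ i * (∑ j ∈ univ.erase i, G j * (A i j) ^ (α i j * p) * x j ^ p))
        = ∑ i, ∑ j ∈ univ.erase i, ξ i * (G j * (A i j) ^ (α i j * p) * x j ^ p) := by
      refine Finset.sum_congr rfl fun i _ => ?_
      rw [Finset.mul_sum]
    rw [h1, sum_erase_swap (fun i j => ξ i * (G j * (A i j) ^ (α i j * p) * x j ^ p))]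
    refine Finset.sum_congr rfl fun i _ => ?_
    rw [Finset.sum_mul]
    exact Finset.sum_congr rfl fun j _ => by ring
  have hswap7 : (∑ i, ∑ j, ξ i * F j * (B i j) ^ (β i j * p) * E i j * x j ^ p)
      = ∑ i, (∑ j, ξ j * (B j i) ^ (β j i * p) * E j i) * (F i * x i ^ p) := by
    rw [Finset.sum_comm]
    refine Finset.sum_congr rfl fun i _ => ?_
    rw [Finset.sum_mul]
    exact Finset.sum_congr rfl fun j _ => by ring
  have hfinal : (∑ i, p * (ε - dlow i) * ξ i * x i ^ p)
      + (∑ i, p * ξ i * G i * A i i * x i ^ p)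
      + (∑ i, (p / q) * ξ i * (∑ j ∈ univ.erase i, G j * (A i j) ^ ((1 - α i j) * q)) * x i ^ p)
      + (∑ i, (∑ j ∈ univ.erase i, ξ j * (A j i) ^ (α j i * p)) * (G i * x i ^ p))
      + (∑ i, (p / q) * ξ i * (∑ j, F j * (B i j) ^ ((1 - β i j) * q) * E i j) * x i ^ p)
      + (∑ i, (∑ j, ξ j * (B j i) ^ (β j i * p) * E j i) * (F i * x i ^ p)) ≤ 0 := by
    simp only [← Finset.sum_add_distrib]
    refine Finset.sum_nonpos fun i _ => ?_
    have h0 : (0:ℝ) ≤ p * x i ^ p := mul_nonneg hp0.le (hxp i)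
    have h2 := mul_le_mul_of_nonneg_left (hineq i) h0
    rw [mul_zero] at h2
    refine le_trans (le_of_eq ?_) h2
    field_simp
    ring
  refine le_trans (add_le_add_left (Finset.sum_le_sum fun i _ => step1 i) _) ?_
  rw [hA1, hC, hcancel, hswap4, hswap7]
  linarith [hfinal]


open Real Finset

private lemma sign_mul_abs' (W : ℝ) : Real.sign W * |W| = W := by
  rcases lt_trichotomy W 0 with h | h | h
  · rw [Real.sign_of_neg h, abs_of_neg h]; ring
  · simp [h]
  · rw [Real.sign_of_pos h, abs_of_pos h]; ring

private lemma mul_deriv_bound {p : ℝ} (hp : 1 < p) {W W' R : ℝ}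
    (h : Real.sign W * W' ≤ R) :
    p * |W| ^ (p - 2) * W * W' ≤ p * |W| ^ (p - 1) * R := by
  rcases eq_or_ne W 0 with h0 | h0
  · simp [h0, Real.zero_rpow (show p - 1 ≠ 0 by linarith)]
  · have habs : (0:ℝ) < |W| := abs_pos.mpr h0
    have key : |W| ^ (p - 2) * W = |W| ^ (p - 1) * Real.sign W := by
      calc |W| ^ (p - 2) * W = |W| ^ (p - 2) * (Real.sign W * |W|) := by
            rw [sign_mul_abs']
        _ = (|W| ^ (p - 2) * |W| ^ (1:ℝ)) * Real.sign W := by rw [Real.rpow_one]; ring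
        _ = |W| ^ (p - 1) * Real.sign W := by
            rw [← Real.rpow_add habs, show p - 2 + 1 = p - 1 by ring]
    calc p * |W| ^ (p - 2) * W * W' = (p * |W| ^ (p - 1)) * (Real.sign W * W') := by
          rw [mul_assoc p, key]; ring
      _ ≤ (p * |W| ^ (p - 1)) * R := by
          apply mul_le_mul_of_nonneg_left h (by positivity)
      _ = p * |W| ^ (p - 1) * R := by ring


open Real Finset

private lemma periodic_abs_le {ω : ℝ} (hω : 0 < ω) {h : ℝ → ℝ}
    (hper : Function.Periodic h ω) {M : ℝ}
    (hM : IsLUB ((fun t => |h t|) '' Set.Ioc 0 ω) M) (t : ℝ) : |h t| ≤ M := by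
  set k : ℤ := ⌈t / ω⌉ - 1 with hk
  have h1 : (k : ℝ) < t / ω := by
    push_cast [hk]
    have := Int.ceil_lt_add_one (t / ω)
    linarith
  have h2 : t / ω ≤ (k : ℝ) + 1 := by
    push_cast [hk]
    have := Int.le_ceil (t / ω)
    linarith
  have hmem : t - k * ω ∈ Set.Ioc 0 ω := by
    have e1 : (k:ℝ) * ω < t := (lt_div_iff₀ hω).mp h1
    have e2 : t ≤ ((k:ℝ) + 1) * ω := (div_le_iff₀ hω).mp h2
    constructor <;> [linarith; nlinarith]
  have heq : h (t - k * ω) = h t := hper.sub_int_mul_eq k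
  have : |h (t - k * ω)| ≤ M := hM.1 ⟨t - k * ω, hmem, rfl⟩
  rwa [heq] at this

private lemma lub_nonneg {ω : ℝ} (hω : 0 < ω) {h : ℝ → ℝ} {M : ℝ}
    (hM : IsLUB ((fun t => |h t|) '' Set.Ioc 0 ω) M) : 0 ≤ M :=
  le_trans (abs_nonneg (h ω)) (hM.1 ⟨ω, ⟨hω, le_refl ω⟩, rfl⟩)


/-- `u : ℝ → Fin n → ℝ` is a solution of the delayed system
`u_i'(t) = -d_i(t) u_i(t) + ∑_j a_{ij}(t) g_j(u_j(t)) + ∑_j b_{ij}(t) f_j(u_j(t - τ_{ij})) + I_i(t)`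
on `[-τmax, ∞)`: it is continuous on `[-τmax, ∞)` and differentiable, satisfying the
equations, for `t > 0`. -/
def IsSolution (n : ℕ) (τmax : ℝ)
    (d : Fin n → ℝ → ℝ) (a b : Fin n → Fin n → ℝ → ℝ) (I : Fin n → ℝ → ℝ)
    (g f : Fin n → ℝ → ℝ) (τ : Fin n → Fin n → ℝ)
    (u : ℝ → Fin n → ℝ) : Prop :=
  (∀ i, ContinuousOn (fun t => u t i) (Set.Ici (-τmax))) ∧
  (∀ i, ∀ t : ℝ, 0 < t → HasDerivAt (fun s => u s i)
      (-(d i t) * u t i + ∑ j, a i j t * g j (u t j)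
        + ∑ j, b i j t * f j (u (t - τ i j) j) + I i t) t)

/-- `v : ℝ → Fin n → ℝ` solves the delayed system on all of `ℝ`. -/
def IsGlobalSolution (n : ℕ)
    (d : Fin n → ℝ → ℝ) (a b : Fin n → Fin n → ℝ → ℝ) (I : Fin n → ℝ → ℝ)
    (g f : Fin n → ℝ → ℝ) (τ : Fin n → Fin n → ℝ)
    (v : ℝ → Fin n → ℝ) : Prop :=
  ∀ i, ∀ t : ℝ, HasDerivAt (fun s => v s i)
      (-(d i t) * v t i + ∑ j, a i j t * g j (v t j)
        + ∑ j, b i j t * f j (v (t - τ i j) j) + I i t) t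

/-- Exponential contraction of pairs of solutions (uniqueness part of Theorem 1). -/
theorem theorem1_uniqueness
    (n : ℕ) (hn : 1 ≤ n) (ω : ℝ) (hω : 0 < ω)
    (d : Fin n → ℝ → ℝ) (a b : Fin n → Fin n → ℝ → ℝ) (I : Fin n → ℝ → ℝ)
    (hd_cont : ∀ i, Continuous (d i)) (ha_cont : ∀ i j, Continuous (a i j))
    (hb_cont : ∀ i j, Continuous (b i j)) (hI_cont : ∀ i, Continuous (I i))
    (hd_per : ∀ i, Function.Periodic (d i) ω)
    (ha_per : ∀ i j, Function.Periodic (a i j) ω)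
    (hb_per : ∀ i j, Function.Periodic (b i j) ω)
    (hI_per : ∀ i, Function.Periodic (I i) ω)
    (τ : Fin n → Fin n → ℝ) (hτ : ∀ i j, 0 ≤ τ i j)
    (τmax : ℝ) (hτmax : IsGreatest {x | ∃ i j, x = τ i j} τmax)
    (dlow : Fin n → ℝ) (hdlow_pos : ∀ i, 0 < dlow i)
    (hdlow : ∀ i t, dlow i ≤ d i t)
    (astar bstar : Fin n → Fin n → ℝ)
    (hastar : ∀ i j, IsLUB ((fun t => |a i j t|) '' Set.Ioc 0 ω) (astar i j))
    (hbstar : ∀ i j, IsLUB ((fun t => |b i j t|) '' Set.Ioc 0 ω) (bstar i j))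
    (G F : Fin n → ℝ) (hG : ∀ i, 0 < G i) (hF : ∀ i, 0 < F i)
    (g f : Fin n → ℝ → ℝ)
    (hg : ∀ i x u, |g i (x + u) - g i x| ≤ G i * |u|)
    (hf : ∀ i x u, |f i (x + u) - f i x| ≤ F i * |u|)
    (p q : ℝ) (hp : 1 < p) (hq : 1 < q) (hpq : 1 / p + 1 / q = 1)
    (ε : ℝ) (hε : 0 < ε) (ξ : Fin n → ℝ) (hξ : ∀ i, 0 < ξ i)
    (α β : Fin n → Fin n → ℝ)
    (hineq : ∀ i,
      (-dlow i + ε) * ξ i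
        + G i * (ξ i * astar i i
            + (1 / p) * ∑ j ∈ univ.erase i, ξ j * (astar j i) ^ (α j i * p))
        + (1 / q) * ξ i * ∑ j ∈ univ.erase i, G j * (astar i j) ^ ((1 - α i j) * q)
        + (1 / p) * F i * ∑ j, ξ j * (bstar j i) ^ (β j i * p) * exp (ε * τ j i)
        + (1 / q) * ξ i * ∑ j, F j * (bstar i j) ^ ((1 - β i j) * q) * exp (ε * τ i j)
        ≤ 0) :
    ∀ u v : ℝ → Fin n → ℝ, IsSolution n τmax d a b I g f τ u →
      IsSolution n τmax d a b I g f τ v →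
      ∀ i, ∃ C > 0, ∀ t : ℝ, 0 ≤ t →
        |u t i - v t i| ≤ C * exp (-ε * t) := by
  intro u v hu hv i
  have hp0 : (0:ℝ) < p := by linarith
  obtain ⟨⟨i1, j1, hτw⟩, hτub⟩ := hτmax
  have hτle : ∀ k j, τ k j ≤ τmax := fun k j => hτub ⟨k, j, rfl⟩
  have hτmax0 : 0 ≤ τmax := by rw [hτw]; exact hτ i1 j1
  have hastar_le : ∀ k j t, |a k j t| ≤ astar k j := fun k j t =>
    periodic_abs_le hω (ha_per k j) (hastar k j) t
  have hbstar_le : ∀ k j t, |b k j t| ≤ bstar k j := fun k j t =>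
    periodic_abs_le hω (hb_per k j) (hbstar k j) t
  have hastar0 : ∀ k j, 0 ≤ astar k j := fun k j => lub_nonneg hω (hastar k j)
  have hbstar0 : ∀ k j, 0 ≤ bstar k j := fun k j => lub_nonneg hω (hbstar k j)
  set z : ℝ → Fin n → ℝ := fun t k => u t k - v t k with hz
  have hz_cont : ∀ k, ContinuousOn (fun t => z t k) (Set.Ici (-τmax)) := fun k =>
    (hu.1 k).sub (hv.1 k)
  have hz_deriv : ∀ k t, 0 < t → HasDerivAt (fun s => z s k)
      (-(d k t) * z t k + (∑ j, a k j t * (g j (u t j) - g j (v t j)))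
        + ∑ j, b k j t * (f j (u (t - τ k j) j) - f j (v (t - τ k j) j))) t := by
    intro k t ht
    have h1 := (hu.2 k t ht).sub (hv.2 k t ht)
    refine h1.congr_deriv ?_
    simp only [hz, mul_sub, Finset.sum_sub_distrib]
    ring
  have hΔg : ∀ t j, |g j (u t j) - g j (v t j)| ≤ G j * |z t j| := by
    intro t j
    have h := hg j (v t j) (z t j)
    rwa [show v t j + z t j = u t j by simp [hz]] at h
  have hΔf : ∀ t' j, |f j (u t' j) - f j (v t' j)| ≤ F j * |z t' j| := by
    intro t' j
    have h := hf j (v t' j) (z t' j)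
    rwa [show v t' j + z t' j = u t' j by simp [hz]] at h
  set ψ : Fin n → ℝ → ℝ :=
    fun k s => |exp (ε * max s (-τmax)) * z (max s (-τmax)) k| ^ p with hψdef
  have hψ_cont : ∀ k, Continuous (ψ k) := by
    intro k
    have hρ : Continuous (fun s : ℝ => max s (-τmax)) := continuous_id.max continuous_const
    have hmem : ∀ s : ℝ, max s (-τmax) ∈ Set.Ici (-τmax) := fun s => Set.mem_Ici.mpr (le_max_right _ _)
    have hin : Continuous (fun s => exp (ε * max s (-τmax)) * z (max s (-τmax)) k) :=
      (Real.continuous_exp.comp (continuous_const.mul hρ)).mul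
        ((hz_cont k).comp_continuous hρ hmem)
    exact hin.abs.rpow_const (fun s => Or.inr hp0.le)
  have hψ_nonneg : ∀ k s, 0 ≤ ψ k s := fun k s => Real.rpow_nonneg (abs_nonneg _) p
  have hψ_eq : ∀ k s, -τmax ≤ s → ψ k s = |exp (ε * s) * z s k| ^ p := by
    intro k s hs
    simp only [hψdef, max_eq_left hs]
  set Φ : Fin n → ℝ → ℝ := fun k r => ∫ s in (0:ℝ)..r, ψ k s with hΦdef
  have hΦ_deriv : ∀ k r, HasDerivAt (Φ k) (ψ k r) r := fun k r =>
    ((hψ_cont k).integral_hasStrictDerivAt 0 r).hasDerivAt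
  have hΦ_cont : ∀ k, Continuous (Φ k) := fun k =>
    continuous_iff_continuousAt.mpr fun r => (hΦ_deriv k r).continuousAt
  have hΦdiff_nonneg : ∀ (k j : Fin n) (r : ℝ), 0 ≤ Φ j r - Φ j (r - τ k j) := by
    intro k j r
    have hint : Φ j r - Φ j (r - τ k j) = ∫ s in (r - τ k j)..r, ψ j s := by
      simp only [hΦdef]
      exact intervalIntegral.integral_interval_sub_left
        ((hψ_cont j).intervalIntegrable 0 r) ((hψ_cont j).intervalIntegrable 0 (r - τ k j))
    rw [hint]
    exact intervalIntegral.integral_nonneg (by linarith [hτ k j]) (fun s _ => hψ_nonneg j s)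
  set c : Fin n → Fin n → ℝ :=
    fun k j => ξ k * F j * (bstar k j) ^ (β k j * p) * exp (ε * τ k j) with hcdef
  have hc0 : ∀ k j, 0 ≤ c k j := fun k j =>
    mul_nonneg (mul_nonneg (mul_nonneg (hξ k).le (hF j).le)
      (Real.rpow_nonneg (hbstar0 k j) _)) (exp_pos _).le
  set V : ℝ → ℝ :=
    fun r => (∑ k, ξ k * ψ k r) + ∑ k, ∑ j, c k j * (Φ j r - Φ j (r - τ k j)) with hVdef
  have hV_cont : Continuous V := by
    rw [hVdef]
    refine Continuous.add ?_ ?_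
    · exact continuous_finset_sum _ fun k _ => continuous_const.mul (hψ_cont k)
    · exact continuous_finset_sum _ fun k _ => continuous_finset_sum _ fun j _ =>
        continuous_const.mul ((hΦ_cont j).sub ((hΦ_cont j).comp
          (continuous_id.sub continuous_const)))
  have hV_nonneg : ∀ r, 0 ≤ V r := by
    intro r
    rw [hVdef]
    exact add_nonneg
      (Finset.sum_nonneg fun k _ => mul_nonneg (hξ k).le (hψ_nonneg k r))
      (Finset.sum_nonneg fun k _ => Finset.sum_nonneg fun j _ =>
        mul_nonneg (hc0 k j) (hΦdiff_nonneg k j r))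
  -- the key derivative estimate
  have key : ∀ t : ℝ, 0 < t → ∃ Vd : ℝ, HasDerivAt V Vd t ∧ Vd ≤ 0 := by
    intro t ht
    have hψtd : ∀ k, HasDerivAt (ψ k)
        (p * |exp (ε * t) * z t k| ^ (p - 2) * (exp (ε * t) * z t k) *
          (exp (ε * t) * ε * z t k + exp (ε * t) *
            (-(d k t) * z t k + (∑ j, a k j t * (g j (u t j) - g j (v t j)))
              + ∑ j, b k j t * (f j (u (t - τ k j) j) - f j (v (t - τ k j) j))))) t := by
      intro k
      have hW : HasDerivAt (fun s => exp (ε * s) * z s k)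
          (exp (ε * t) * ε * z t k + exp (ε * t) *
            (-(d k t) * z t k + (∑ j, a k j t * (g j (u t j) - g j (v t j)))
              + ∑ j, b k j t * (f j (u (t - τ k j) j) - f j (v (t - τ k j) j)))) t := by
        have hlin : HasDerivAt (fun s : ℝ => ε * s) ε t := by
          simpa using (hasDerivAt_id t).const_mul ε
        exact hlin.exp.mul (hz_deriv k t ht)
      have h1 := (hasDerivAt_abs_rpow (exp (ε * t) * z t k) hp).comp t hW
      have hEq : ψ k =ᶠ[nhds t] fun s => |exp (ε * s) * z s k| ^ p := by
        filter_upwards [Ioi_mem_nhds (show -τmax < t by linarith)] with s hs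
        exact hψ_eq k s (le_of_lt hs)
      exact HasDerivAt.congr_of_eventuallyEq h1 hEq
    have hΦd2 : ∀ k j, HasDerivAt (fun r => Φ j r - Φ j (r - τ k j))
        (ψ j t - ψ j (t - τ k j)) t := by
      intro k j
      refine (hΦ_deriv j t).sub ?_
      have h3 := (hΦ_deriv j (t - τ k j)).comp t ((hasDerivAt_id t).sub_const (τ k j))
      simpa [Function.comp_def] using h3
    have hVd : HasDerivAt V
        ((∑ k, ξ k * (p * |exp (ε * t) * z t k| ^ (p - 2) * (exp (ε * t) * z t k) *
          (exp (ε * t) * ε * z t k + exp (ε * t) *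
            (-(d k t) * z t k + (∑ j, a k j t * (g j (u t j) - g j (v t j)))
              + ∑ j, b k j t * (f j (u (t - τ k j) j) - f j (v (t - τ k j) j))))))
          + ∑ k, ∑ j, c k j * (ψ j t - ψ j (t - τ k j))) t := by
      rw [hVdef]
      exact HasDerivAt.add
        (HasDerivAt.fun_sum fun k _ => (hψtd k).const_mul (ξ k))
        (HasDerivAt.fun_sum fun k _ => HasDerivAt.fun_sum fun j _ => (hΦd2 k j).const_mul (c k j))
    refine ⟨_, hVd, ?_⟩
    have hsign : ∀ k, Real.sign (exp (ε * t) * z t k) *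
          (exp (ε * t) * ε * z t k + exp (ε * t) *
            (-(d k t) * z t k + (∑ j, a k j t * (g j (u t j) - g j (v t j)))
              + ∑ j, b k j t * (f j (u (t - τ k j) j) - f j (v (t - τ k j) j))))
        ≤ (ε - dlow k) * |exp (ε * t) * z t k|
          + ∑ j, astar k j * G j * |exp (ε * t) * z t j|
          + ∑ j, bstar k j * F j * exp (ε * τ k j) *
              |exp (ε * (t - τ k j)) * z (t - τ k j) j| := by
      intro k
      have e : Real.sign (exp (ε * t) * z t k) *
          (exp (ε * t) * ε * z t k + exp (ε * t) *
            (-(d k t) * z t k + (∑ j, a k j t * (g j (u t j) - g j (v t j)))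
              + ∑ j, b k j t * (f j (u (t - τ k j) j) - f j (v (t - τ k j) j))))
          = (ε - d k t) * (Real.sign (exp (ε * t) * z t k) * (exp (ε * t) * z t k))
            + Real.sign (exp (ε * t) * z t k) *
                (exp (ε * t) * ∑ j, a k j t * (g j (u t j) - g j (v t j)))
            + Real.sign (exp (ε * t) * z t k) *
                (exp (ε * t) * ∑ j, b k j t *
                  (f j (u (t - τ k j) j) - f j (v (t - τ k j) j))) := by
        ring
      rw [e, sign_mul_self']
      have habs_bound : ∀ (s r : ℝ), Real.sign s * r ≤ |r| := by
        intro s r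
        calc Real.sign s * r ≤ |Real.sign s * r| := le_abs_self _
          _ = |Real.sign s| * |r| := abs_mul _ _
          _ ≤ 1 * |r| := mul_le_mul_of_nonneg_right (abs_sign_le_one' _) (abs_nonneg _)
          _ = |r| := one_mul _
      refine add_le_add (add_le_add ?_ ?_) ?_
      · exact mul_le_mul_of_nonneg_right (by linarith [hdlow k t]) (abs_nonneg _)
      · calc Real.sign (exp (ε * t) * z t k) *
              (exp (ε * t) * ∑ j, a k j t * (g j (u t j) - g j (v t j)))
            ≤ |exp (ε * t) * ∑ j, a k j t * (g j (u t j) - g j (v t j))| := habs_bound _ _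
          _ = exp (ε * t) * |∑ j, a k j t * (g j (u t j) - g j (v t j))| := by
              rw [abs_mul, Real.abs_exp]
          _ ≤ exp (ε * t) * ∑ j, astar k j * (G j * |z t j|) := by
              refine mul_le_mul_of_nonneg_left ?_ (exp_pos _).le
              calc |∑ j, a k j t * (g j (u t j) - g j (v t j))|
                  ≤ ∑ j, |a k j t * (g j (u t j) - g j (v t j))| :=
                    Finset.abs_sum_le_sum_abs _ _
                _ ≤ ∑ j, astar k j * (G j * |z t j|) := by
                    refine Finset.sum_le_sum fun j _ => ?_
                    rw [abs_mul]
                    exact mul_le_mul (hastar_le k j t) (hΔg t j) (abs_nonneg _) (hastar0 k j)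
          _ = ∑ j, astar k j * G j * |exp (ε * t) * z t j| := by
              rw [Finset.mul_sum]
              refine Finset.sum_congr rfl fun j _ => ?_
              rw [abs_mul, Real.abs_exp]
              ring
      · calc Real.sign (exp (ε * t) * z t k) *
              (exp (ε * t) * ∑ j, b k j t * (f j (u (t - τ k j) j) - f j (v (t - τ k j) j)))
            ≤ |exp (ε * t) * ∑ j, b k j t *
                (f j (u (t - τ k j) j) - f j (v (t - τ k j) j))| := habs_bound _ _
          _ = exp (ε * t) * |∑ j, b k j t *
                (f j (u (t - τ k j) j) - f j (v (t - τ k j) j))| := by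
              rw [abs_mul, Real.abs_exp]
          _ ≤ exp (ε * t) * ∑ j, bstar k j * (F j * |z (t - τ k j) j|) := by
              refine mul_le_mul_of_nonneg_left ?_ (exp_pos _).le
              calc |∑ j, b k j t * (f j (u (t - τ k j) j) - f j (v (t - τ k j) j))|
                  ≤ ∑ j, |b k j t * (f j (u (t - τ k j) j) - f j (v (t - τ k j) j))| :=
                    Finset.abs_sum_le_sum_abs _ _
                _ ≤ ∑ j, bstar k j * (F j * |z (t - τ k j) j|) := by
                    refine Finset.sum_le_sum fun j _ => ?_
                    rw [abs_mul]
                    exact mul_le_mul (hbstar_le k j t) (hΔf _ j) (abs_nonneg _) (hbstar0 k j)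
          _ = ∑ j, bstar k j * F j * exp (ε * τ k j) *
                |exp (ε * (t - τ k j)) * z (t - τ k j) j| := by
              rw [Finset.mul_sum]
              refine Finset.sum_congr rfl fun j _ => ?_
              rw [abs_mul, Real.abs_exp]
              have he : exp (ε * τ k j) * exp (ε * (t - τ k j)) = exp (ε * t) := by
                rw [← Real.exp_add]; congr 1; ring
              calc exp (ε * t) * (bstar k j * (F j * |z (t - τ k j) j|))
                  = (exp (ε * τ k j) * exp (ε * (t - τ k j))) *
                      (bstar k j * (F j * |z (t - τ k j) j|)) := by rw [he]
                _ = bstar k j * F j * exp (ε * τ k j) *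
                      (exp (ε * (t - τ k j)) * |z (t - τ k j) j|) := by ring
    have hle1 : ∀ k, ξ k * (p * |exp (ε * t) * z t k| ^ (p - 2) * (exp (ε * t) * z t k) *
          (exp (ε * t) * ε * z t k + exp (ε * t) *
            (-(d k t) * z t k + (∑ j, a k j t * (g j (u t j) - g j (v t j)))
              + ∑ j, b k j t * (f j (u (t - τ k j) j) - f j (v (t - τ k j) j)))))
        ≤ ξ k * (p * |exp (ε * t) * z t k| ^ (p - 1) *
            ((ε - dlow k) * |exp (ε * t) * z t k|
              + ∑ j, astar k j * G j * |exp (ε * t) * z t j|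
              + ∑ j, bstar k j * F j * exp (ε * τ k j) *
                  |exp (ε * (t - τ k j)) * z (t - τ k j) j|)) := fun k =>
      mul_le_mul_of_nonneg_left (mul_deriv_bound hp (hsign k)) (hξ k).le
    have heq2 : (∑ k, ∑ j, c k j * (ψ j t - ψ j (t - τ k j)))
        = ∑ k, ∑ j, ξ k * F j * (bstar k j) ^ (β k j * p) * exp (ε * τ k j) *
            (|exp (ε * t) * z t j| ^ p
              - |exp (ε * (t - τ k j)) * z (t - τ k j) j| ^ p) := by
      refine Finset.sum_congr rfl fun k _ => Finset.sum_congr rfl fun j _ => ?_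
      rw [hψ_eq j t (by linarith), hψ_eq j (t - τ k j) (by linarith [hτle k j])]
    calc (∑ k, ξ k * (p * |exp (ε * t) * z t k| ^ (p - 2) * (exp (ε * t) * z t k) *
          (exp (ε * t) * ε * z t k + exp (ε * t) *
            (-(d k t) * z t k + (∑ j, a k j t * (g j (u t j) - g j (v t j)))
              + ∑ j, b k j t * (f j (u (t - τ k j) j) - f j (v (t - τ k j) j))))))
          + ∑ k, ∑ j, c k j * (ψ j t - ψ j (t - τ k j))
        ≤ (∑ k, ξ k * (p * |exp (ε * t) * z t k| ^ (p - 1) *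
            ((ε - dlow k) * |exp (ε * t) * z t k|
              + ∑ j, astar k j * G j * |exp (ε * t) * z t j|
              + ∑ j, bstar k j * F j * exp (ε * τ k j) *
                  |exp (ε * (t - τ k j)) * z (t - τ k j) j|)))
          + ∑ k, ∑ j, c k j * (ψ j t - ψ j (t - τ k j)) :=
          add_le_add_left (Finset.sum_le_sum fun k _ => hle1 k) _
      _ = (∑ k, ξ k * (p * |exp (ε * t) * z t k| ^ (p - 1) *
            ((ε - dlow k) * |exp (ε * t) * z t k|
              + ∑ j, astar k j * G j * |exp (ε * t) * z t j|
              + ∑ j, bstar k j * F j * exp (ε * τ k j) *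
                  |exp (ε * (t - τ k j)) * z (t - τ k j) j|)))
          + ∑ k, ∑ j, ξ k * F j * (bstar k j) ^ (β k j * p) * exp (ε * τ k j) *
              (|exp (ε * t) * z t j| ^ p
                - |exp (ε * (t - τ k j)) * z (t - τ k j) j| ^ p) := by rw [heq2]
      _ ≤ 0 :=
          key_algebra hp hq hpq ε ξ G F dlow astar bstar
            (fun k j => exp (ε * τ k j)) α β hξ hG hF hastar0 hbstar0
            (fun k j => (exp_pos _).le) hineq
            (fun k => |exp (ε * t) * z t k|)
            (fun k j => |exp (ε * (t - τ k j)) * z (t - τ k j) j|)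
            (fun k => abs_nonneg _) (fun k j => abs_nonneg _)
  -- V is antitone on [0, ∞)
  have hanti : AntitoneOn V (Set.Ici (0:ℝ)) := by
    refine antitoneOn_of_deriv_nonpos (convex_Ici 0) hV_cont.continuousOn ?_ ?_
    · intro t ht
      rw [interior_Ici] at ht
      obtain ⟨Vd, hVd, _⟩ := key t ht
      exact hVd.differentiableAt.differentiableWithinAt
    · intro t ht
      rw [interior_Ici] at ht
      obtain ⟨Vd, hVd, hVd0⟩ := key t ht
      rw [hVd.deriv]; exact hVd0
  -- conclusion
  refine ⟨(V 0 / ξ i) ^ (1 / p) + 1, ?_, ?_⟩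
  · have h0 : (0:ℝ) ≤ (V 0 / ξ i) ^ (1 / p) :=
      Real.rpow_nonneg (div_nonneg (hV_nonneg 0) (hξ i).le) _
    linarith
  · intro t ht0
    have h2 : ξ i * ψ i t ≤ ∑ k, ξ k * ψ k t :=
      Finset.single_le_sum (f := fun k => ξ k * ψ k t)
        (fun k _ => mul_nonneg (hξ k).le (hψ_nonneg k t)) (Finset.mem_univ i)
    have h3 : 0 ≤ ∑ k, ∑ j, c k j * (Φ j t - Φ j (t - τ k j)) :=
      Finset.sum_nonneg fun k _ => Finset.sum_nonneg fun j _ =>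
        mul_nonneg (hc0 k j) (hΦdiff_nonneg k j t)
    have h1 : ξ i * ψ i t ≤ V t := by
      rw [hVdef]
      dsimp only
      linarith
    have h4 : V t ≤ V 0 := hanti Set.self_mem_Ici (Set.mem_Ici.mpr ht0) ht0
    have h5 : ψ i t = |exp (ε * t) * z t i| ^ p := hψ_eq i t (by linarith)
    have h6 : |exp (ε * t) * z t i| ^ p ≤ V 0 / ξ i := by
      rw [le_div_iff₀ (hξ i)]
      rw [h5] at h1
      nlinarith
    have hX : (0:ℝ) ≤ |exp (ε * t) * z t i| := abs_nonneg _
    have h7 : |exp (ε * t) * z t i| ≤ (V 0 / ξ i) ^ (1 / p) := by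
      have h8 := Real.rpow_le_rpow (Real.rpow_nonneg hX p) h6
        (by positivity : (0:ℝ) ≤ 1 / p)
      rwa [← Real.rpow_mul hX, mul_one_div_cancel hp0.ne', Real.rpow_one] at h8
    have hgoal : |u t i - v t i| = |z t i| := by simp [hz]
    rw [hgoal]
    have hzabs : |z t i| = exp (-(ε * t)) * |exp (ε * t) * z t i| := by
      rw [abs_mul, Real.abs_exp, ← mul_assoc, ← Real.exp_add,
        show -(ε * t) + ε * t = 0 by ring, Real.exp_zero, one_mul]
    calc |z t i| = exp (-(ε * t)) * |exp (ε * t) * z t i| := hzabs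
      _ ≤ exp (-(ε * t)) * (V 0 / ξ i) ^ (1 / p) :=
          mul_le_mul_of_nonneg_left h7 (exp_pos _).le
      _ ≤ ((V 0 / ξ i) ^ (1 / p) + 1) * exp (-ε * t) := by
          rw [show -ε * t = -(ε * t) by ring,
            mul_comm ((V 0 / ξ i) ^ (1 / p) + 1) (exp (-(ε * t)))]
          exact mul_le_mul_of_nonneg_left (by linarith) (exp_pos _).le
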